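/- arXiv:2507.16351 — 2 statements merged into one kernel-verified Lean document; each statement's English description precedes it below -/
import Mathlib

section
/- For every n ≥ 8 with n ≡ 2 (mod 3), the graph K₂ ∨ ((n−2)/3)·P₃ (the join of an edge with (n−2)/3 disjoint paths on 3 vertices) is planar, has n vertices, has (8n−13)/3 edges, and contains no vertex-disjoint union of a 3-cycle and a 5-cycle. -/
/-- `H` is a minor of `G`: branch sets are nonempty, connected, pairwise
disjoint, and adjacencies of `H` are realized between branch sets. -/
def SimpleGraph.IsMinorOf {α β : Type} (H : SimpleGraph α) (G : SimpleGraph β) : Prop :=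
  ∃ φ : α → Set β,
    (∀ a, (φ a).Nonempty) ∧
    (∀ a, ((G.induce (φ a)).Connected)) ∧
    (∀ a b, a ≠ b → Disjoint (φ a) (φ b)) ∧
    (∀ a b, H.Adj a b → ∃ x ∈ φ a, ∃ y ∈ φ b, G.Adj x y)

/-- Planarity via Wagner's theorem: no `K₅` minor and no `K₃,₃` minor. -/
def SimpleGraph.IsPlanar {β : Type} (G : SimpleGraph β) : Prop :=
  ¬ (completeGraph (Fin 5)).IsMinorOf G ∧
  ¬ (completeBipartiteGraph (Fin 3) (Fin 3)).IsMinorOf G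
/-- `G` contains a vertex-disjoint union of a 3-cycle and a 5-cycle. -/
def SimpleGraph.ContainsC3C5 {V : Type} (G : SimpleGraph V) : Prop :=
  ∃ (a b : V) (c : G.Walk a a) (d : G.Walk b b),
    c.IsCycle ∧ c.length = 3 ∧ d.IsCycle ∧ d.length = 5 ∧
    ∀ x, x ∈ c.support → x ∉ d.support
/-- The join `K₂ ∨ (k · P₃)`: an edge `{u,v}` (the two vertices `Sum.inl 0`,
`Sum.inl 1`) joined to `k` vertex-disjoint paths on 3 vertices. -/
def joinK2P3 (k : ℕ) : SimpleGraph (Fin 2 ⊕ Fin k × Fin 3) :=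
  SimpleGraph.fromRel (fun x y =>
    match x, y with
    | Sum.inl a, Sum.inl b => a ≠ b
    | Sum.inl _, Sum.inr _ => True
    | Sum.inr _, Sum.inl _ => False
    | Sum.inr (i, a), Sum.inr (j, b) => i = j ∧ (b : ℕ) = (a : ℕ) + 1)



namespace JAux
open SimpleGraph

variable {k : ℕ}

def rel (k : ℕ) : (Fin 2 ⊕ Fin k × Fin 3) → (Fin 2 ⊕ Fin k × Fin 3) → Prop := fun x y =>
  match x, y with
  | Sum.inl a, Sum.inl b => a ≠ b
  | Sum.inl _, Sum.inr _ => True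
  | Sum.inr _, Sum.inl _ => False
  | Sum.inr (i, a), Sum.inr (j, b) => i = j ∧ (b : ℕ) = (a : ℕ) + 1

instance : DecidableRel (rel k) := fun x y => by
  rcases x with a | ⟨i, a⟩ <;> rcases y with b | ⟨j, b⟩ <;> dsimp [rel] <;> infer_instance

lemma joinK2P3_eq : joinK2P3 k = SimpleGraph.fromRel (rel k) := rfl

instance : DecidableRel (joinK2P3 k).Adj := fun x y => by
  rw [joinK2P3_eq]
  exact decidable_of_iff _ (SimpleGraph.fromRel_adj (rel k) x y).symm

lemma adj_inl {t : Fin 2} {x : Fin 2 ⊕ Fin k × Fin 3} :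
    (joinK2P3 k).Adj (Sum.inl t) x ↔ x ≠ Sum.inl t := by
  rw [joinK2P3_eq, SimpleGraph.fromRel_adj]
  constructor
  · rintro ⟨h, -⟩ he; exact h he.symm
  · intro h
    refine ⟨fun he => h he.symm, ?_⟩
    rcases x with b | ⟨j, b⟩
    · exact Or.inl (by dsimp [rel]; rintro rfl; exact h rfl)
    · exact Or.inl trivial

lemma adj_inr_inr {p q : Fin k × Fin 3} :
    (joinK2P3 k).Adj (Sum.inr p) (Sum.inr q) ↔
      p.1 = q.1 ∧ ((q.2 : ℕ) = (p.2 : ℕ) + 1 ∨ (p.2 : ℕ) = (q.2 : ℕ) + 1) := by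
  obtain ⟨i, a⟩ := p; obtain ⟨j, b⟩ := q
  rw [joinK2P3_eq, SimpleGraph.fromRel_adj]
  dsimp [rel]
  constructor
  · rintro ⟨hne, (⟨rfl, h⟩ | ⟨rfl, h⟩)⟩
    · exact ⟨rfl, Or.inl h⟩
    · exact ⟨rfl, Or.inr h⟩
  · rintro ⟨rfl, (h | h)⟩
    · refine ⟨fun he => ?_, Or.inl ⟨rfl, h⟩⟩
      injection he with he; rw [Prod.mk.injEq] at he; omega
    · refine ⟨fun he => ?_, Or.inr ⟨rfl, h⟩⟩
      injection he with he; rw [Prod.mk.injEq] at he; omega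

lemma adj_inr_inl {p : Fin k × Fin 3} {t : Fin 2} :
    (joinK2P3 k).Adj (Sum.inr p) (Sum.inl t) := by
  exact (adj_inl (t := t) (x := Sum.inr p)).2 (by simp) |>.symm

end JAux

namespace JAux
open SimpleGraph
variable {k : ℕ}

lemma card_V : Fintype.card (Fin 2 ⊕ Fin k × Fin 3) = 2 + k * 3 := by simp

lemma deg_inl (t : Fin 2) : (joinK2P3 k).degree (Sum.inl t) = 3 * k + 1 := by
  classical
  have h : (joinK2P3 k).neighborFinset (Sum.inl t) = Finset.univ.erase (Sum.inl t) := by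
    ext x
    simp [adj_inl, Finset.mem_erase]
  rw [← card_neighborFinset_eq_degree, h, Finset.card_erase_of_mem (Finset.mem_univ _),
    Finset.card_univ, card_V]
  omega

lemma nbr_inr (i : Fin k) (a : Fin 3) :
    (joinK2P3 k).neighborFinset (Sum.inr (i, a)) =
      {Sum.inl 0, Sum.inl 1} ∪ (Finset.univ.filter
        (fun b : Fin 3 => (b : ℕ) = (a:ℕ) + 1 ∨ (a : ℕ) = (b:ℕ) + 1)).image
          (fun b => Sum.inr (i, b)) := by
  classical
  ext x
  rcases x with t | ⟨j, b⟩
  · simp [adj_inr_inl]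
    fin_cases t <;> simp
  · simp [adj_inr_inr]
    tauto

lemma deg_inr (i : Fin k) (a : Fin 3) :
    (joinK2P3 k).degree (Sum.inr (i, a)) = if (a : ℕ) = 1 then 4 else 3 := by
  classical
  rw [← card_neighborFinset_eq_degree, nbr_inr]
  rw [Finset.card_union_of_disjoint (by simp), Finset.card_image_of_injective _ (by
    intro x y h; simpa [Prod.ext_iff] using h)]
  fin_cases a <;> simp <;> decide

lemma sum_deg : ∑ v, (joinK2P3 k).degree v = 16 * k + 2 := by
  classical
  rw [Fintype.sum_sum_type]
  have h1 : ∑ t : Fin 2, (joinK2P3 k).degree (Sum.inl t) = 2 * (3 * k + 1) := by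
    simp [deg_inl, two_mul]
  have h2 : ∑ p : Fin k × Fin 3, (joinK2P3 k).degree (Sum.inr p) = k * 10 := by
    rw [Fintype.sum_prod_type]
    have : ∀ i : Fin k, ∑ a : Fin 3, (joinK2P3 k).degree (Sum.inr (i, a)) = 10 := by
      intro i
      rw [Fin.sum_univ_three]
      simp [deg_inr]
    simp [this]
  rw [h1, h2]; ring

lemma edge_count : (joinK2P3 k).edgeSet.ncard = 8 * k + 1 := by
  classical
  rw [← coe_edgeFinset, Set.ncard_coe_finset]
  have h := (joinK2P3 k).sum_degrees_eq_twice_card_edges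
  rw [sum_deg] at h
  omega
end JAux

namespace JAux
open SimpleGraph
variable {k : ℕ}

def cp : (Fin 2 ⊕ Fin k × Fin 3) → Option (Fin k) := Sum.elim (fun _ => none) (fun p => some p.1)

lemma walk_const_copy {u v : Fin 2 ⊕ Fin k × Fin 3} (w : (joinK2P3 k).Walk u v)
    (h : ∀ x ∈ w.support, ∃ p : Fin k × Fin 3, x = Sum.inr p) : cp u = cp v := by
  induction w with
  | nil => rfl
  | @cons u u' v ha p ih =>
    have hu : u ∈ (Walk.cons ha p).support := Walk.start_mem_support _
    have hu' : u' ∈ (Walk.cons ha p).support := by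
      rw [Walk.support_cons]; exact List.mem_cons_of_mem _ (Walk.start_mem_support _)
    obtain ⟨pu, rfl⟩ := h _ hu
    obtain ⟨pu', rfl⟩ := h _ hu'
    have hcp : pu.1 = pu'.1 := (adj_inr_inr.1 ha).1
    have := ih (fun x hx => h x (by rw [Walk.support_cons]; exact List.mem_cons_of_mem _ hx))
    rw [← this]
    simp [cp, hcp]

lemma support_const_copy {u v : Fin 2 ⊕ Fin k × Fin 3} (w : (joinK2P3 k).Walk u v)
    (h : ∀ x ∈ w.support, ∃ p : Fin k × Fin 3, x = Sum.inr p) :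
    ∀ x ∈ w.support, cp x = cp u := by
  intro x hx
  exact (walk_const_copy (w.takeUntil x hx)
    (fun y hy => h y (Walk.support_takeUntil_subset _ hx hy))).symm

lemma no_inr_cycle {v : Fin 2 ⊕ Fin k × Fin 3} (w : (joinK2P3 k).Walk v v) (hw : w.IsCycle)
    (h : ∀ x ∈ w.support, ∃ p : Fin k × Fin 3, x = Sum.inr p) : False := by
  classical
  have h3 : 3 ≤ w.length := hw.three_le_length
  have hnd : w.support.tail.Nodup := hw.support_nodup
  have hlen_t : w.support.tail.length = w.length := by
    have := w.length_support
    have : w.support.tail.length = w.support.length - 1 := by simp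
    omega
  set f : (Fin 2 ⊕ Fin k × Fin 3) → Fin 3 := Sum.elim (fun _ => 0) Prod.snd with hf
  have hinj : ∀ x ∈ w.support.tail, ∀ y ∈ w.support.tail, f x = f y → x = y := by
    intro x hx y hy hfe
    have hx' := List.mem_of_mem_tail hx
    have hy' := List.mem_of_mem_tail hy
    obtain ⟨px, rfl⟩ := h x hx'
    obtain ⟨py, rfl⟩ := h y hy'
    have hcx := support_const_copy w h _ hx'
    have hcy := support_const_copy w h _ hy'
    have : cp (Sum.inr px) = cp (Sum.inr py) := by rw [hcx, hcy]
    simp [cp] at this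
    simp [hf] at hfe
    exact congrArg Sum.inr (Prod.ext_iff.2 ⟨this, hfe⟩)
  have hle : (w.support.tail.map f).length ≤ 3 := by
    simpa using (hnd.map_on hinj).length_le_card
  rw [List.length_map] at hle
  have hlen : w.length = 3 := by omega
  -- destructure the support
  have hchain := w.isChain_adj_support
  have hcons : w.support = v :: w.support.tail := w.support_eq_cons
  rcases ht : w.support.tail with _ | ⟨b, _ | ⟨c, _ | ⟨d, _ | ⟨e, l⟩⟩⟩⟩ <;>
    rw [ht] at hlen_t <;> simp at hlen_t <;> try omega
  -- tail = [b, c, d]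
  have h2 : w.reverse.support = [d, c, b, v] := by
    rw [Walk.support_reverse, hcons, ht]; rfl
  rw [Walk.support_eq_cons] at h2
  have hdv : v = d := by injection h2
  subst hdv
  rw [hcons, ht] at hchain
  simp only [List.isChain_cons_cons, List.isChain_singleton, and_true] at hchain
  obtain ⟨hab, hbc, hcv⟩ := hchain
  have hvmem : v ∈ w.support := by rw [hcons]; exact List.mem_cons_self
  have hbmem : b ∈ w.support := by rw [hcons, ht]; simp
  have hcmem : c ∈ w.support := by rw [hcons, ht]; simp
  obtain ⟨pv, rfl⟩ := h _ hvmem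
  obtain ⟨pb, rfl⟩ := h _ hbmem
  obtain ⟨pc, rfl⟩ := h _ hcmem
  obtain ⟨-, h1⟩ := adj_inr_inr.1 hab
  obtain ⟨-, h2'⟩ := adj_inr_inr.1 hbc
  obtain ⟨-, h3'⟩ := adj_inr_inr.1 hcv
  have e1 : (pv.2 : ℕ) < 3 := pv.2.isLt
  have e2 : (pb.2 : ℕ) < 3 := pb.2.isLt
  have e3 : (pc.2 : ℕ) < 3 := pc.2.isLt
  omega

namespace JAux
open SimpleGraph
variable {k : ℕ}

lemma isInr_of_not_inl {x : Fin 2 ⊕ Fin k × Fin 3} (h : ∀ t : Fin 2, x ≠ Sum.inl t) :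
    ∃ p : Fin k × Fin 3, x = Sum.inr p := by
  rcases x with t | p
  · exact absurd rfl (h t)
  · exact ⟨p, rfl⟩

lemma no_C3C5 : ¬ (joinK2P3 k).ContainsC3C5 := by
  rintro ⟨a, b, c, d, hc, hc3, hd, hd5, hdisj⟩
  have hcinl : ∃ t : Fin 2, Sum.inl t ∈ c.support := by
    by_contra hno
    push_neg at hno
    exact no_inr_cycle c hc (fun x hx => isInr_of_not_inl (fun t he => hno t (he ▸ hx)))
  obtain ⟨t1, ht1⟩ := hcinl
  have hdinl : ∃ t : Fin 2, Sum.inl t ∈ d.support := by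
    by_contra hno
    push_neg at hno
    exact no_inr_cycle d hd (fun x hx => isInr_of_not_inl (fun t he => hno t (he ▸ hx)))
  obtain ⟨t2, ht2⟩ := hdinl
  have ht2t1 : t2 ≠ t1 := fun h => hdisj _ ht1 (h ▸ ht2)
  have huniq : ∀ t : Fin 2, Sum.inl t ∈ d.support → t = t2 := by
    intro t ht
    have h1 : t ≠ t1 := fun h => hdisj _ ht1 (h ▸ ht)
    have := t.isLt; have := t1.isLt; have := t2.isLt
    have h2 : (t : ℕ) ≠ (t1 : ℕ) := fun h => h1 (Fin.ext h)
    have h3 : (t2 : ℕ) ≠ (t1 : ℕ) := fun h => ht2t1 (Fin.ext h)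
    exact Fin.ext (by omega)
  set d' := d.rotate _ ht2 with hd'
  clear_value d'
  have hd'c : d'.IsCycle := by rw [hd']; exact hd.rotate ht2
  have hlen' : d'.length = 5 := by
    rw [hd']
    have h1 := (Walk.rotate_darts d _ ht2).perm.length_eq
    rw [Walk.length_darts, Walk.length_darts] at h1
    omega
  have hsup : ∀ x, x ∈ d'.support → x ∈ d.support := by
    intro x hx
    rw [Walk.support_eq_cons, List.mem_cons] at hx
    rcases hx with rfl | hx
    · exact ht2
    · rw [hd'] at hx
      exact List.mem_of_mem_tail
        (((Walk.support_rotate d _ ht2).perm.mem_iff).1 hx)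
  -- destructure d'.support
  have hnd : d'.support.tail.Nodup := hd'c.support_nodup
  have hlen_t : d'.support.tail.length = 5 := by
    have := d'.length_support
    have h2 : d'.support.tail.length = d'.support.length - 1 := by simp
    omega
  have hcons : d'.support = Sum.inl t2 :: d'.support.tail := d'.support_eq_cons
  have hchain := d'.isChain_adj_support
  obtain ⟨tl, ht⟩ : ∃ l, d'.support.tail = l := ⟨_, rfl⟩
  rw [ht] at hlen_t hnd hcons
  rcases tl with _ | ⟨w1, _ | ⟨w2, _ | ⟨w3, _ | ⟨w4, _ | ⟨w5, _ | ⟨w6, l⟩⟩⟩⟩⟩⟩ <;>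
    simp at hlen_t <;> try omega
  -- tail = [w1,w2,w3,w4,w5]
  have h2 : d'.reverse.support = [w5, w4, w3, w2, w1, Sum.inl t2] := by
    rw [Walk.support_reverse, hcons]; rfl
  rw [Walk.support_eq_cons] at h2
  have hdv : Sum.inl t2 = w5 := by injection h2
  rw [hcons] at hchain
  simp only [List.isChain_cons_cons, List.isChain_singleton, and_true] at hchain
  obtain ⟨h01, h12, h23, h34, h45⟩ := hchain
  -- w1..w4 are inr
  have hmem : ∀ x, x ∈ [w1, w2, w3, w4] → x ∈ d.support := by
    intro x hx
    apply hsup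
    rw [hcons]
    simp at hx ⊢
    tauto
  have hwinr : ∀ x ∈ [w1, w2, w3, w4], ∃ p : Fin k × Fin 3, x = Sum.inr p := by
    intro x hx
    apply isInr_of_not_inl
    intro t he
    subst he
    have := huniq t (hmem _ hx)
    subst this
    rw [← hdv] at hnd
    -- nodup [w1,w2,w3,w4, inl t2] but x = inl t2 ∈ [w1..w4]
    simp at hnd hx
    rcases hx with rfl | rfl | rfl | rfl <;> tauto
  obtain ⟨p1, he1⟩ := hwinr w1 (by simp)
  obtain ⟨p2, he2⟩ := hwinr w2 (by simp)
  obtain ⟨p3, he3⟩ := hwinr w3 (by simp)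
  obtain ⟨p4, he4⟩ := hwinr w4 (by simp)
  subst he1; subst he2; subst he3; subst he4
  obtain ⟨hi12, hv12⟩ := adj_inr_inr.1 h12
  obtain ⟨hi23, hv23⟩ := adj_inr_inr.1 h23
  obtain ⟨hi34, hv34⟩ := adj_inr_inr.1 h34
  -- distinctness
  rw [← hdv] at hnd
  simp at hnd
  have f12 : p1 ≠ p2 := fun h => by simp [h] at hnd
  have f13 : p1 ≠ p3 := fun h => by simp [h] at hnd
  have f14 : p1 ≠ p4 := fun h => by simp [h] at hnd
  have f23 : p2 ≠ p3 := fun h => by simp [h] at hnd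
  have f24 : p2 ≠ p4 := fun h => by simp [h] at hnd
  have f34 : p3 ≠ p4 := fun h => by simp [h] at hnd
  -- same copy, so coordinates distinct in Fin 3
  have g12 : (p1.2 : ℕ) ≠ (p2.2 : ℕ) := fun h => f12 (Prod.ext_iff.2 ⟨hi12, Fin.ext h⟩)
  have g13 : (p1.2 : ℕ) ≠ (p3.2 : ℕ) := fun h => f13 (Prod.ext_iff.2 ⟨hi12.trans hi23, Fin.ext h⟩)
  have g14 : (p1.2 : ℕ) ≠ (p4.2 : ℕ) :=
    fun h => f14 (Prod.ext_iff.2 ⟨(hi12.trans hi23).trans hi34, Fin.ext h⟩)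
  have g23 : (p2.2 : ℕ) ≠ (p3.2 : ℕ) := fun h => f23 (Prod.ext_iff.2 ⟨hi23, Fin.ext h⟩)
  have g24 : (p2.2 : ℕ) ≠ (p4.2 : ℕ) := fun h => f24 (Prod.ext_iff.2 ⟨hi23.trans hi34, Fin.ext h⟩)
  have g34 : (p3.2 : ℕ) ≠ (p4.2 : ℕ) := fun h => f34 (Prod.ext_iff.2 ⟨hi34, Fin.ext h⟩)
  have l1 : (p1.2 : ℕ) < 3 := p1.2.isLt
  have l2 : (p2.2 : ℕ) < 3 := p2.2.isLt
  have l3 : (p3.2 : ℕ) < 3 := p3.2.isLt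
  have l4 : (p4.2 : ℕ) < 3 := p4.2.isLt
  omega
end JAux

namespace JAux
open SimpleGraph
variable {k : ℕ}

lemma ind_walk_cp {S : Set (Fin 2 ⊕ Fin k × Fin 3)}
    (hinr : ∀ x ∈ S, ∃ p : Fin k × Fin 3, x = Sum.inr p)
    {u v : S} (w : ((joinK2P3 k).induce S).Walk u v) : cp u.1 = cp v.1 := by
  induction w with
  | nil => rfl
  | @cons u u' v ha p ih =>
    have hG : (joinK2P3 k).Adj u.1 u'.1 := ha
    obtain ⟨pu, hpu⟩ := hinr _ u.2
    obtain ⟨pu', hpu'⟩ := hinr _ u'.2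
    rw [hpu, hpu'] at hG
    rw [← ih]
    rw [hpu, hpu']
    simp [cp, (adj_inr_inr.1 hG).1]

lemma branch_copy {S : Set (Fin 2 ⊕ Fin k × Fin 3)}
    (hconn : ((joinK2P3 k).induce S).Connected)
    (hinr : ∀ x ∈ S, ∃ p : Fin k × Fin 3, x = Sum.inr p) :
    ∃ i : Fin k, ∀ x ∈ S, ∃ v : Fin 3, x = Sum.inr (i, v) := by
  have hne : Nonempty S := hconn.nonempty
  obtain ⟨x0, hx0⟩ := hne
  obtain ⟨⟨i0, v0⟩, hp0⟩ := hinr _ hx0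
  refine ⟨i0, fun x hx => ?_⟩
  obtain ⟨⟨i, v⟩, hp⟩ := hinr _ hx
  have hr := hconn.preconnected ⟨x, hx⟩ ⟨x0, hx0⟩
  obtain ⟨w⟩ := hr
  have := ind_walk_cp hinr w
  simp only [hp, hp0, cp, Sum.elim_inr, Option.some_inj] at this
  exact ⟨v, by rw [hp, this]⟩

lemma bad_card {ι : Type} [Fintype ι] [DecidableEq ι] (φ : ι → Set (Fin 2 ⊕ Fin k × Fin 3))
    [DecidablePred (fun a => Sum.inl 0 ∈ φ a ∨ Sum.inl 1 ∈ φ a)]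
    (hdisj : ∀ a b, a ≠ b → Disjoint (φ a) (φ b)) :
    (Finset.univ.filter (fun a => Sum.inl 0 ∈ φ a ∨ Sum.inl 1 ∈ φ a)).card ≤ 2 := by
  classical
  have := Finset.card_le_card_of_injOn
    (f := fun a => if Sum.inl 0 ∈ φ a then (0 : Fin 2) else 1)
    (s := Finset.univ.filter (fun a => Sum.inl 0 ∈ φ a ∨ Sum.inl 1 ∈ φ a))
    (t := Finset.univ) (fun a _ => Finset.mem_univ _) ?_
  · simpa using this
  · intro a ha b hb hfe
    simp only [Finset.coe_filter, Set.mem_setOf_eq, Finset.mem_univ, true_and] at ha hb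
    by_contra hne
    have hd := hdisj a b hne
    have key : ∀ c, (Sum.inl 0 ∈ φ c ∨ Sum.inl 1 ∈ φ c) →
        Sum.inl (if Sum.inl 0 ∈ φ c then (0 : Fin 2) else 1) ∈ φ c := by
      intro c hc
      by_cases h : Sum.inl 0 ∈ φ c
      · simpa [h] using h
      · simp only [h, if_false]
        tauto
    have ka := key a ha
    have kb := key b hb
    have hfe' : (if Sum.inl 0 ∈ φ a then (0:Fin 2) else 1) = (if Sum.inl 0 ∈ φ b then (0:Fin 2) else 1) := hfe
    rw [hfe'] at ka
    exact Set.disjoint_left.1 hd ka kb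

lemma good_inr {ι : Type} (φ : ι → Set (Fin 2 ⊕ Fin k × Fin 3)) {a : ι}
    (h : ¬ (Sum.inl 0 ∈ φ a ∨ Sum.inl 1 ∈ φ a)) :
    ∀ x ∈ φ a, ∃ p : Fin k × Fin 3, x = Sum.inr p := by
  intro x hx
  apply isInr_of_not_inl
  rintro t rfl
  fin_cases t <;> tauto

lemma no_K5 : ¬ (completeGraph (Fin 5)).IsMinorOf (joinK2P3 k) := by
  rintro ⟨φ, hne, hconn, hdisj, hadj⟩
  classical
  set bad : Finset (Fin 5) :=
    Finset.univ.filter (fun a => Sum.inl 0 ∈ φ a ∨ Sum.inl 1 ∈ φ a) with hbad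
  have hbc : 2 < badᶜ.card := by
    have h1 := bad_card φ hdisj
    rw [← hbad] at h1
    have h2 : badᶜ.card = 5 - bad.card := by
      rw [Finset.card_compl]; simp
    omega
  obtain ⟨a, b, c, ha, hb, hc, hab, hac, hbc'⟩ := Finset.two_lt_card_iff.1 hbc
  have hgood : ∀ x ∈ (bad)ᶜ, ¬ (Sum.inl 0 ∈ φ x ∨ Sum.inl 1 ∈ φ x) := by
    intro x hx
    rw [Finset.mem_compl, hbad, Finset.mem_filter] at hx
    simp only [Finset.mem_univ, true_and] at hx
    exact hx
  obtain ⟨ia, hia⟩ := branch_copy (hconn a) (good_inr φ (hgood a ha))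
  obtain ⟨ib, hib⟩ := branch_copy (hconn b) (good_inr φ (hgood b hb))
  obtain ⟨ic, hic⟩ := branch_copy (hconn c) (good_inr φ (hgood c hc))
  -- adjacency edges
  obtain ⟨x1, hx1, y1, hy1, e1⟩ := hadj a b hab
  obtain ⟨x2, hx2, y2, hy2, e2⟩ := hadj a c hac
  obtain ⟨x3, hx3, y3, hy3, e3⟩ := hadj b c hbc'
  obtain ⟨va1, hva1⟩ := hia _ hx1
  obtain ⟨vb1, hvb1⟩ := hib _ hy1
  obtain ⟨va2, hva2⟩ := hia _ hx2
  obtain ⟨vc2, hvc2⟩ := hic _ hy2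
  obtain ⟨vb3, hvb3⟩ := hib _ hx3
  obtain ⟨vc3, hvc3⟩ := hic _ hy3
  subst hva1; subst hvb1; subst hva2; subst hvc2; subst hvb3; subst hvc3
  obtain ⟨hiab, hc1⟩ := adj_inr_inr.1 e1
  obtain ⟨hiac, hc2⟩ := adj_inr_inr.1 e2
  obtain ⟨hibc, hc3⟩ := adj_inr_inr.1 e3
  dsimp at hiab hiac hibc hc1 hc2 hc3
  subst hiab; subst hiac
  set Ta := Finset.univ.filter (fun v => Sum.inr (ia, v) ∈ φ a) with hTa
  set Tb := Finset.univ.filter (fun v => Sum.inr (ia, v) ∈ φ b) with hTb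
  set Tc := Finset.univ.filter (fun v => Sum.inr (ia, v) ∈ φ c) with hTc
  have hdab : Disjoint Ta Tb := by
    rw [Finset.disjoint_left]
    intro v hv hv'
    rw [hTa, Finset.mem_filter] at hv
    rw [hTb, Finset.mem_filter] at hv'
    exact Set.disjoint_left.1 (hdisj a b hab) hv.2 hv'.2
  have hdac : Disjoint Ta Tc := by
    rw [Finset.disjoint_left]
    intro v hv hv'
    rw [hTa, Finset.mem_filter] at hv
    rw [hTc, Finset.mem_filter] at hv'
    exact Set.disjoint_left.1 (hdisj a c hac) hv.2 hv'.2
  have hdbc : Disjoint Tb Tc := by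
    rw [Finset.disjoint_left]
    intro v hv hv'
    rw [hTb, Finset.mem_filter] at hv
    rw [hTc, Finset.mem_filter] at hv'
    exact Set.disjoint_left.1 (hdisj b c hbc') hv.2 hv'.2
  have hcard : Ta.card + Tb.card + Tc.card ≤ 3 := by
    have h1 : (Ta ∪ Tb ∪ Tc).card ≤ 3 := le_trans (Finset.card_le_univ _) (by simp)
    rw [Finset.card_union_of_disjoint (Finset.disjoint_union_left.2 ⟨hdac, hdbc⟩),
      Finset.card_union_of_disjoint hdab] at h1
    exact h1
  have ma1 : va1 ∈ Ta := by rw [hTa, Finset.mem_filter]; exact ⟨Finset.mem_univ _, hx1⟩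
  have ma2 : va2 ∈ Ta := by rw [hTa, Finset.mem_filter]; exact ⟨Finset.mem_univ _, hx2⟩
  have mb1 : vb1 ∈ Tb := by rw [hTb, Finset.mem_filter]; exact ⟨Finset.mem_univ _, hy1⟩
  have mb3 : vb3 ∈ Tb := by rw [hTb, Finset.mem_filter]; exact ⟨Finset.mem_univ _, hx3⟩
  have mc2 : vc2 ∈ Tc := by rw [hTc, Finset.mem_filter]; exact ⟨Finset.mem_univ _, hy2⟩
  have mc3 : vc3 ∈ Tc := by rw [hTc, Finset.mem_filter]; exact ⟨Finset.mem_univ _, hy3⟩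
  have ca : Ta.card = 1 := by
    have := Finset.card_pos.2 ⟨_, ma1⟩
    have := Finset.card_pos.2 ⟨_, mb1⟩
    have := Finset.card_pos.2 ⟨_, mc2⟩
    omega
  have cb : Tb.card = 1 := by
    have := Finset.card_pos.2 ⟨_, ma1⟩
    have := Finset.card_pos.2 ⟨_, mb1⟩
    have := Finset.card_pos.2 ⟨_, mc2⟩
    omega
  have cc : Tc.card = 1 := by
    have := Finset.card_pos.2 ⟨_, ma1⟩
    have := Finset.card_pos.2 ⟨_, mb1⟩
    have := Finset.card_pos.2 ⟨_, mc2⟩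
    omega
  obtain ⟨wa, hwa⟩ := Finset.card_eq_one.1 ca
  obtain ⟨wb, hwb⟩ := Finset.card_eq_one.1 cb
  obtain ⟨wc, hwc⟩ := Finset.card_eq_one.1 cc
  rw [hwa, Finset.mem_singleton] at ma1 ma2
  rw [hwb, Finset.mem_singleton] at mb1 mb3
  rw [hwc, Finset.mem_singleton] at mc2 mc3
  have q1 : (va1 : ℕ) = (va2 : ℕ) := by rw [ma1, ma2]
  have q2 : (vb1 : ℕ) = (vb3 : ℕ) := by rw [mb1, mb3]
  have q3 : (vc2 : ℕ) = (vc3 : ℕ) := by rw [mc2, mc3]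
  have l1 : (va1 : ℕ) < 3 := va1.isLt
  have l2 : (vb1 : ℕ) < 3 := vb1.isLt
  have l3 : (vc2 : ℕ) < 3 := vc2.isLt
  omega
end JAux

namespace JAux
open SimpleGraph
variable {k : ℕ}

lemma no_K33 : ¬ (completeBipartiteGraph (Fin 3) (Fin 3)).IsMinorOf (joinK2P3 k) := by
  rintro ⟨φ, hne, hconn, hdisj, hadj⟩
  classical
  set bad : Finset (Fin 3 ⊕ Fin 3) :=
    Finset.univ.filter (fun a => Sum.inl 0 ∈ φ a ∨ Sum.inl 1 ∈ φ a) with hbad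
  have h1 := bad_card φ hdisj
  rw [← hbad] at h1
  have hcu : Fintype.card (Fin 3 ⊕ Fin 3) = 6 := by simp
  have hgoodcard : 4 ≤ badᶜ.card := by
    rw [Finset.card_compl, hcu]; omega
  have hgood : ∀ x ∈ badᶜ, ¬ (Sum.inl 0 ∈ φ x ∨ Sum.inl 1 ∈ φ x) := by
    intro x hx
    rw [Finset.mem_compl, hbad, Finset.mem_filter] at hx
    simp only [Finset.mem_univ, true_and] at hx
    exact hx
  have hL : ∃ a : Fin 3, Sum.inl a ∈ badᶜ := by
    by_contra h
    push_neg at h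
    have hsub : (Finset.univ.image (Sum.inl : Fin 3 → Fin 3 ⊕ Fin 3)) ⊆ bad := by
      intro x hx
      simp only [Finset.mem_image, Finset.mem_univ, true_and] at hx
      obtain ⟨a, rfl⟩ := hx
      have := h a
      rwa [Finset.mem_compl, not_not] at this
    have hc := Finset.card_le_card hsub
    rw [Finset.card_image_of_injective _ Sum.inl_injective, Finset.card_univ] at hc
    simp at hc
    omega
  have hR : ∃ b : Fin 3, Sum.inr b ∈ badᶜ := by
    by_contra h
    push_neg at h
    have hsub : (Finset.univ.image (Sum.inr : Fin 3 → Fin 3 ⊕ Fin 3)) ⊆ bad := by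
      intro x hx
      simp only [Finset.mem_image, Finset.mem_univ, true_and] at hx
      obtain ⟨a, rfl⟩ := hx
      have := h a
      rwa [Finset.mem_compl, not_not] at this
    have hc := Finset.card_le_card hsub
    rw [Finset.card_image_of_injective _ Sum.inr_injective, Finset.card_univ] at hc
    simp at hc
    omega
  obtain ⟨a0, ha0⟩ := hL
  obtain ⟨b0, hb0⟩ := hR
  have hbc : ∀ t ∈ badᶜ, ∃ i : Fin k, ∀ x ∈ φ t, ∃ v : Fin 3, x = Sum.inr (i, v) :=
    fun t ht => branch_copy (hconn t) (good_inr φ (hgood t ht))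
  choose i hi using hbc
  have key : ∀ s (hs : s ∈ badᶜ) t (ht : t ∈ badᶜ),
      (∃ x ∈ φ s, ∃ y ∈ φ t, (joinK2P3 k).Adj x y) → i s hs = i t ht := by
    rintro s hs t ht ⟨x, hx, y, hy, e⟩
    obtain ⟨v1, rfl⟩ := hi s hs x hx
    obtain ⟨v2, rfl⟩ := hi t ht y hy
    exact (adj_inr_inr.1 e).1
  have hcommon : ∀ t (ht : t ∈ badᶜ), i t ht = i (Sum.inl a0) ha0 := by
    intro t ht
    rcases t with aL | aR
    · have e1 := key _ ht _ hb0 (hadj (Sum.inl aL) (Sum.inr b0) (by simp))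
      have e2 := key _ ha0 _ hb0 (hadj (Sum.inl a0) (Sum.inr b0) (by simp))
      rw [e1, ← e2]
    · exact (key _ ha0 _ ht (hadj (Sum.inl a0) (Sum.inr aR) (by simp))).symm
  set i0 := i (Sum.inl a0) ha0 with hi0
  set T : Fin 3 ⊕ Fin 3 → Finset (Fin 3) :=
    fun t => Finset.univ.filter (fun v => Sum.inr (i0, v) ∈ φ t) with hT
  have hTdisj : ∀ s ∈ badᶜ, ∀ t ∈ badᶜ, s ≠ t → Disjoint (T s) (T t) := by
    intro s _ t _ hst
    rw [Finset.disjoint_left]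
    intro v hv hv'
    rw [hT] at hv hv'
    simp only [Finset.mem_filter] at hv hv'
    exact Set.disjoint_left.1 (hdisj s t hst) hv.2 hv'.2
  have hTne : ∀ t ∈ badᶜ, 1 ≤ (T t).card := by
    intro t ht
    obtain ⟨x, hx⟩ := hne t
    obtain ⟨v, rfl⟩ := hi t ht x hx
    rw [hcommon t ht] at hx
    refine Finset.card_pos.2 ⟨v, ?_⟩
    rw [hT]
    simp only [Finset.mem_filter, Finset.mem_univ, true_and]
    exact hx
  have hsum : (badᶜ.biUnion T).card = ∑ t ∈ badᶜ, (T t).card :=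
    Finset.card_biUnion hTdisj
  have hle : (badᶜ.biUnion T).card ≤ 3 := le_trans (Finset.card_le_univ _) (by simp)
  have hge : 4 ≤ ∑ t ∈ badᶜ, (T t).card := by
    calc 4 ≤ badᶜ.card := hgoodcard
    _ = ∑ _t ∈ badᶜ, 1 := Finset.card_eq_sum_ones _
    _ ≤ ∑ t ∈ badᶜ, (T t).card := Finset.sum_le_sum hTne
  omega

end JAux

end JAux

/-- For `n ≥ 8` with `n ≡ 2 (mod 3)`, the graph `K₂ ∨ ((n-2)/3)·P₃` is planar,
has `n` vertices, `(8n-13)/3` edges, and no vertex-disjoint `C₃ ∪ C₅`. -/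
theorem stmt4 (n : ℕ) (hn : 8 ≤ n) (hmod : n % 3 = 2) :
    (joinK2P3 ((n - 2) / 3)).IsPlanar ∧
    Fintype.card (Fin 2 ⊕ Fin ((n - 2) / 3) × Fin 3) = n ∧
    (joinK2P3 ((n - 2) / 3)).edgeSet.ncard = (8 * n - 13) / 3 ∧
    ¬ (joinK2P3 ((n - 2) / 3)).ContainsC3C5 := by
  refine ⟨⟨JAux.JAux.no_K5, JAux.JAux.no_K33⟩, ?_, ?_, JAux.JAux.no_C3C5⟩
  · rw [JAux.card_V]; omega
  · rw [JAux.edge_count]; omega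
end

section
/- In the graph K₂ ∨ (k·P₃) with k ≥ 2 (join of an edge uv with k disjoint paths on 3 vertices), every cycle of length 5 passes through both u and v. -/
lemma fin3_pigeon : ∀ x y z w : Fin 3, x = y ∨ x = z ∨ x = w ∨ y = z ∨ y = w ∨ z = w := by
  decide

lemma adj_inr {k : ℕ} {p q : Fin k × Fin 3}
    (h : (joinK2P3 k).Adj (Sum.inr p) (Sum.inr q)) : p.1 = q.1 := by
  obtain ⟨i, x⟩ := p; obtain ⟨j, y⟩ := q
  rw [joinK2P3, SimpleGraph.fromRel_adj] at h
  rcases h.2 with ⟨h, _⟩ | ⟨h, _⟩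
  · exact h
  · exact h.symm

lemma two_inl {α : Type*} {w x y : Fin 2}
    (hx : (Sum.inl w : Fin 2 ⊕ α) ≠ Sum.inl x)
    (hy : (Sum.inl w : Fin 2 ⊕ α) ≠ Sum.inl y)
    (hxy : (Sum.inl x : Fin 2 ⊕ α) ≠ Sum.inl y) : False := by
  simp only [ne_eq, Sum.inl.injEq] at hx hy hxy
  omega

lemma no4path (k : ℕ) (p q r s : Fin k × Fin 3)
    (h1 : (joinK2P3 k).Adj (Sum.inr p) (Sum.inr q))
    (h2 : (joinK2P3 k).Adj (Sum.inr q) (Sum.inr r))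
    (h3 : (joinK2P3 k).Adj (Sum.inr r) (Sum.inr s))
    (d1 : (Sum.inr p : Fin 2 ⊕ Fin k × Fin 3) ≠ Sum.inr q)
    (d2 : (Sum.inr p : Fin 2 ⊕ Fin k × Fin 3) ≠ Sum.inr r)
    (d3 : (Sum.inr p : Fin 2 ⊕ Fin k × Fin 3) ≠ Sum.inr s)
    (d4 : (Sum.inr q : Fin 2 ⊕ Fin k × Fin 3) ≠ Sum.inr r)
    (d5 : (Sum.inr q : Fin 2 ⊕ Fin k × Fin 3) ≠ Sum.inr s)
    (d6 : (Sum.inr r : Fin 2 ⊕ Fin k × Fin 3) ≠ Sum.inr s) : False := by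
  obtain ⟨i, x⟩ := p; obtain ⟨j, y⟩ := q; obtain ⟨l, z⟩ := r; obtain ⟨m, w⟩ := s
  have e1 : i = j := adj_inr h1
  have e2 : j = l := adj_inr h2
  have e3 : l = m := adj_inr h3
  subst e1; subst e2; subst e3
  simp only [ne_eq, Sum.inr.injEq, Prod.mk.injEq, true_and] at d1 d2 d3 d4 d5 d6
  rcases fin3_pigeon x y z w with h | h | h | h | h | h <;> tauto

lemma key (k : ℕ) (w : Fin 2) (a b c d e : Fin 2 ⊕ Fin k × Fin 3)
    (h1 : (joinK2P3 k).Adj a b) (h2 : (joinK2P3 k).Adj b c)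
    (h3 : (joinK2P3 k).Adj c d) (h4 : (joinK2P3 k).Adj d e)
    (h5 : (joinK2P3 k).Adj e a)
    (hbc : b ≠ c) (hbd : b ≠ d) (hbe : b ≠ e) (hba : b ≠ a)
    (hcd : c ≠ d) (hce : c ≠ e) (hca : c ≠ a)
    (hde : d ≠ e) (hda : d ≠ a) (hea : e ≠ a) :
    Sum.inl w = a ∨ Sum.inl w = b ∨ Sum.inl w = c ∨ Sum.inl w = d ∨ Sum.inl w = e := by
  by_contra hcon
  push_neg at hcon
  obtain ⟨ha, hb, hc, hd, he⟩ := hcon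
  have hab := hba.symm
  have hac := hca.symm
  have had := hda.symm
  have hae := hea.symm
  have hcb := hbc.symm
  have hdb := hbd.symm
  have heb := hbe.symm
  have hdc := hcd.symm
  have hec := hce.symm
  have hed := hde.symm
  rcases a with va | pa <;> rcases b with vb | pb <;> rcases c with vc | pc <;>
    rcases d with vd | pd <;> rcases e with ve | pe <;>
    first
      | exact two_inl ha hb hab
      | exact two_inl ha hc hac
      | exact two_inl ha hd had
      | exact two_inl ha he hae
      | exact two_inl hb hc hbc
      | exact two_inl hb hd hbd
      | exact two_inl hb he hbe
      | exact two_inl hc hd hcd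
      | exact two_inl hc he hce
      | exact two_inl hd he hde
      | exact no4path k _ _ _ _ h2 h3 h4 hbc hbd hbe hcd hce hde
      | exact no4path k _ _ _ _ h3 h4 h5 hcd hce hca hde hda hea
      | exact no4path k _ _ _ _ h4 h5 h1 hde hda hdb hea heb hab
      | exact no4path k _ _ _ _ h5 h1 h2 hea heb hec hab hac hbc
      | exact no4path k _ _ _ _ h1 h2 h3 hab hac had hbc hbd hcd

/-- In `K₂ ∨ (k·P₃)` with `k ≥ 2`, every 5-cycle passes through both `u` and `v`. -/
theorem stmt5 (k : ℕ) (hk : 2 ≤ k) (a : Fin 2 ⊕ Fin k × Fin 3)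
    (c : (joinK2P3 k).Walk a a) (hc : c.IsCycle) (hlen : c.length = 5) :
    Sum.inl 0 ∈ c.support ∧ Sum.inl 1 ∈ c.support := by
  cases c with
  | nil => simp at hlen
  | cons h1 p1 =>
  rename_i b
  cases p1 with
  | nil => simp at hlen
  | cons h2 p2 =>
  rename_i cc
  cases p2 with
  | nil => simp at hlen
  | cons h3 p3 =>
  rename_i d
  cases p3 with
  | nil => simp at hlen
  | cons h4 p4 =>
  rename_i e
  cases p4 with
  | nil => simp at hlen
  | cons h5 p5 =>
  cases p5 with
  | cons h6 p6 => simp [SimpleGraph.Walk.length_cons] at hlen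
  | nil =>
    have hnd := hc.support_nodup  -- tail nodup
    simp [SimpleGraph.Walk.support_cons, List.nodup_cons] at hnd
    simp only [SimpleGraph.Walk.support_cons, SimpleGraph.Walk.support_nil, List.mem_cons, List.not_mem_nil, or_false]
    obtain ⟨⟨hbc, hbd, hbe, hba⟩, ⟨hcd, hce, hca⟩, ⟨hde, hda⟩, hea⟩ := hnd
    constructor
    · have := key k 0 a b cc d e h1 h2 h3 h4 h5 hbc hbd hbe hba hcd hce hca hde hda hea
      tauto
    · have := key k 1 a b cc d e h1 h2 h3 h4 h5 hbc hbd hbe hba hcd hce hca hde hda hea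
      tauto
end
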